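/- Let the edge E of a polygon connect c + d_i and c + d_j in ℝ², and let Ẽ connect c + μ d_i and c + μ d_j for 0 < μ < 1, with d_i ≠ d_j. Then E and Ẽ lie on parallel lines, and the distance between these lines equals (1 − μ) |d_{jx} d_{iy} − d_{ix} d_{jy}| / ‖d_j − d_i‖. -/

import Mathlib

open scoped RealInnerProductSpace

lemma lagrange2 (x y : EuclideanSpace ℝ (Fin 2)) :
    (x 0 * y 1 - x 1 * y 0) ^ 2 = ‖x‖ ^ 2 * ‖y‖ ^ 2 - (⟪x, y⟫) ^ 2 := by
  have hx : ‖x‖ ^ 2 = ⟪x, x⟫ := (real_inner_self_eq_norm_sq x).symm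
  have hy : ‖y‖ ^ 2 = ⟪y, y⟫ := (real_inner_self_eq_norm_sq y).symm
  rw [hx, hy]
  simp only [PiLp.inner_apply, RCLike.inner_apply, starRingEnd_apply, star_trivial,
    Fin.sum_univ_two]
  ring

lemma cross_le (x y : EuclideanSpace ℝ (Fin 2)) :
    |x 0 * y 1 - x 1 * y 0| ≤ ‖x‖ * ‖y‖ := by
  have h := lagrange2 x y
  have h2 : (x 0 * y 1 - x 1 * y 0) ^ 2 ≤ (‖x‖ * ‖y‖) ^ 2 := by nlinarith [sq_nonneg (⟪x, y⟫)]
  calc |x 0 * y 1 - x 1 * y 0| = Real.sqrt ((x 0 * y 1 - x 1 * y 0) ^ 2) :=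
        (Real.sqrt_sq_eq_abs _).symm
    _ ≤ Real.sqrt ((‖x‖ * ‖y‖) ^ 2) := Real.sqrt_le_sqrt h2
    _ = ‖x‖ * ‖y‖ := by
        rw [Real.sqrt_sq_eq_abs]; exact abs_of_nonneg (by positivity)

lemma proj_perp {n : Type*} [Fintype n] (a e : EuclideanSpace ℝ n) (he : e ≠ 0) :
    ⟪a + (-⟪a, e⟫ / ‖e‖ ^ 2) • e, e⟫ = 0 := by
  have h : ⟪e, e⟫ = ‖e‖ ^ 2 := real_inner_self_eq_norm_sq e
  have h2 : ‖e‖ ≠ 0 := norm_ne_zero_iff.mpr he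
  rw [inner_add_left, real_inner_smul_left, h]
  field_simp
  ring

lemma cross_eq (x y : EuclideanSpace ℝ (Fin 2)) (h : ⟪x, y⟫ = 0) :
    |x 0 * y 1 - x 1 * y 0| = ‖x‖ * ‖y‖ := by
  have hl := lagrange2 x y
  rw [h] at hl
  calc |x 0 * y 1 - x 1 * y 0| = Real.sqrt ((x 0 * y 1 - x 1 * y 0) ^ 2) :=
        (Real.sqrt_sq_eq_abs _).symm
    _ = Real.sqrt ((‖x‖ * ‖y‖) ^ 2) := by rw [hl]; ring_nf
    _ = ‖x‖ * ‖y‖ := by rw [Real.sqrt_sq_eq_abs]; exact abs_of_nonneg (by positivity)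

theorem stmt_4 (c di dj : EuclideanSpace ℝ (Fin 2)) (hne : di ≠ dj)
    (μ : ℝ) (hμ0 : 0 < μ) (hμ1 : μ < 1) :
    AffineSubspace.Parallel
      (affineSpan ℝ {c + di, c + dj})
      (affineSpan ℝ {c + μ • di, c + μ • dj}) ∧
    sInf {r : ℝ | ∃ p ∈ (affineSpan ℝ {c + di, c + dj} :
          AffineSubspace ℝ (EuclideanSpace ℝ (Fin 2))),
        ∃ q ∈ (affineSpan ℝ {c + μ • di, c + μ • dj} :
          AffineSubspace ℝ (EuclideanSpace ℝ (Fin 2))), r = dist p q} =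
      (1 - μ) * |dj 0 * di 1 - di 0 * dj 1| / ‖dj - di‖ := by
  set e : EuclideanSpace ℝ (Fin 2) := dj - di with he_def
  have he : e ≠ 0 := sub_ne_zero.mpr (Ne.symm hne)
  have hen : (0:ℝ) < ‖e‖ := norm_pos_iff.mpr he
  have hμ1' : (0:ℝ) < 1 - μ := by linarith
  -- the vsubs
  have hv1 : (c + dj) -ᵥ (c + di) = e := by
    simp [he_def, vsub_eq_sub]
  have hv2 : (c + μ • dj) -ᵥ (c + μ • di) = μ • e := by
    simp [he_def, vsub_eq_sub, smul_sub]
  constructor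
  · rw [AffineSubspace.affineSpan_pair_parallel_iff_vectorSpan_eq,
      vectorSpan_pair_rev, vectorSpan_pair_rev, hv1, hv2,
      Submodule.span_singleton_smul_eq (isUnit_iff_ne_zero.mpr hμ0.ne') e]
  · set a : EuclideanSpace ℝ (Fin 2) := (1 - μ) • di with ha_def
    have hcross : ∀ u : ℝ, (a + u • e) 0 * e 1 - (a + u • e) 1 * e 0
        = (1 - μ) * (di 0 * dj 1 - di 1 * dj 0) := by
      intro u
      simp only [ha_def, he_def, PiLp.add_apply, PiLp.smul_apply, PiLp.sub_apply,
        smul_eq_mul]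
      ring
    have hDval : ∀ u : ℝ, |(a + u • e) 0 * e 1 - (a + u • e) 1 * e 0|
        = (1 - μ) * |dj 0 * di 1 - di 0 * dj 1| := by
      intro u
      rw [hcross u, abs_mul, abs_of_pos hμ1']
      congr 1
      rw [show dj 0 * di 1 - di 0 * dj 1 = -(di 0 * dj 1 - di 1 * dj 0) by ring, abs_neg]
    -- lower bound for all elements
    set D : ℝ := (1 - μ) * |dj 0 * di 1 - di 0 * dj 1| / ‖e‖ with hD_def
    have hlow : ∀ u : ℝ, D ≤ ‖a + u • e‖ := by
      intro u
      rw [hD_def, div_le_iff₀ hen, ← hDval u]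
      exact cross_le _ _
    -- membership characterization
    have hmem1 : ∀ p ∈ (affineSpan ℝ {c + di, c + dj} :
        AffineSubspace ℝ (EuclideanSpace ℝ (Fin 2))), ∃ s : ℝ, p = (c + di) + s • e := by
      intro p hp
      have : (p - (c + di)) +ᵥ (c + di) ∈ affineSpan ℝ {c + di, c + dj} := by
        simpa [vadd_eq_add] using hp
      rw [vadd_left_mem_affineSpan_pair, hv1] at this
      obtain ⟨s, hs⟩ := this
      exact ⟨s, by rw [hs]; abel⟩
    have hmem2 : ∀ q ∈ (affineSpan ℝ {c + μ • di, c + μ • dj} :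
        AffineSubspace ℝ (EuclideanSpace ℝ (Fin 2))), ∃ t : ℝ, q = (c + μ • di) + t • e := by
      intro q hq
      have : (q - (c + μ • di)) +ᵥ (c + μ • di) ∈ affineSpan ℝ {c + μ • di, c + μ • dj} := by
        simpa [vadd_eq_add] using hq
      rw [vadd_left_mem_affineSpan_pair, hv2] at this
      obtain ⟨t, ht⟩ := this
      exact ⟨t * μ, by rw [mul_smul, ht]; abel⟩
    have hdiff : ∀ s t : ℝ, ((c + di) + s • e) - ((c + μ • di) + t • e)
        = a + (s - t) • e := by
      intro s t
      rw [ha_def, sub_smul, sub_smul, one_smul]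
      abel
    -- the optimal point
    obtain ⟨u₀, hperp⟩ : ∃ u : ℝ, ⟪a + u • e, e⟫ = 0 := ⟨_, proj_perp a e he⟩
    have hopt : ‖a + u₀ • e‖ = D := by
      have h := cross_eq (a + u₀ • e) e hperp
      rw [hDval u₀] at h
      rw [hD_def, h, mul_div_assoc, div_self hen.ne', mul_one]
    -- the point is in the set
    have hp_mem : (c + di) + u₀ • e ∈ (affineSpan ℝ {c + di, c + dj} :
        AffineSubspace ℝ (EuclideanSpace ℝ (Fin 2))) := by
      have h := smul_vsub_vadd_mem_affineSpan_pair (k := ℝ) u₀ (c + di) (c + dj)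
      rw [hv1] at h
      simpa [vadd_eq_add, add_comm] using h
    have hq_mem : c + μ • di ∈ (affineSpan ℝ {c + μ • di, c + μ • dj} :
        AffineSubspace ℝ (EuclideanSpace ℝ (Fin 2))) := left_mem_affineSpan_pair ℝ _ _
    have hD_mem : D ∈ {r : ℝ | ∃ p ∈ (affineSpan ℝ {c + di, c + dj} :
          AffineSubspace ℝ (EuclideanSpace ℝ (Fin 2))),
        ∃ q ∈ (affineSpan ℝ {c + μ • di, c + μ • dj} :
          AffineSubspace ℝ (EuclideanSpace ℝ (Fin 2))), r = dist p q} := by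
      refine ⟨_, hp_mem, _, hq_mem, ?_⟩
      rw [dist_eq_norm]
      have h0 : ((c + di) + u₀ • e) - (c + μ • di) = a + u₀ • e := by
        have := hdiff u₀ 0
        simpa using this
      rw [h0, hopt]
    have hlow' : ∀ r ∈ {r : ℝ | ∃ p ∈ (affineSpan ℝ {c + di, c + dj} :
          AffineSubspace ℝ (EuclideanSpace ℝ (Fin 2))),
        ∃ q ∈ (affineSpan ℝ {c + μ • di, c + μ • dj} :
          AffineSubspace ℝ (EuclideanSpace ℝ (Fin 2))), r = dist p q}, D ≤ r := by
      rintro r ⟨p, hp, q, hq, rfl⟩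
      obtain ⟨s, rfl⟩ := hmem1 p hp
      obtain ⟨t, rfl⟩ := hmem2 q hq
      rw [dist_eq_norm, hdiff s t]
      exact hlow (s - t)
    exact le_antisymm (csInf_le ⟨D, hlow'⟩ hD_mem) (le_csInf ⟨D, hD_mem⟩ hlow')
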